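/- Let p ∈ (1,∞). Then K(y) → ∞ as y → 0⁺. -/

import Mathlib

open Set Real Filter MeasureTheory

/-- `F_a(y,w)` from the paper (with parameter `p`). -/
noncomputable def Fa (p a y w : ℝ) : ℝ :=
  (8*p*(1/a + 2*y) + (2*p/a + 4*(3*p - 2)*y + 2*(p - 1)*y*w)*w) / (y^2 * (4 + (p - 1)*w))

/-- `G` is the family `a ↦ G_a` of solutions of `G_a' = -F_a(y, G_a)` on `(0,1)`
with `G_a(1) = 0`: each `G_a` is continuous on `(0,1]`, positive on `(0,1)` and
strictly decreasing on `(0,1]`. -/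
def IsGFamily (p : ℝ) (G : ℝ → ℝ → ℝ) : Prop :=
  ∀ a : ℝ, 0 < a →
    ContinuousOn (G a) (Set.Ioc 0 1) ∧
    G a 1 = 0 ∧
    (∀ y ∈ Set.Ioo (0:ℝ) 1, HasDerivAt (G a) (-(Fa p a y (G a y))) y) ∧
    (∀ y ∈ Set.Ioo (0:ℝ) 1, 0 < G a y) ∧
    StrictAntiOn (G a) (Set.Ioc 0 1)

/-- The key pointwise bound `4/y ≤ F_a(y,w)` for `w ≥ 0`. -/
lemma Fa_lower (p a y w : ℝ) (hp : 1 < p) (ha : 0 < a) (hy : 0 < y) (hw : 0 ≤ w) :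
    4 / y ≤ Fa p a y w := by
  have hpw : 0 ≤ (p - 1) * w := mul_nonneg (by linarith) hw
  have hd : 0 < y ^ 2 * (4 + (p - 1) * w) := by positivity
  rw [Fa, div_le_div_iff₀ hy hd]
  have h1a : 0 < 1 / a := by positivity
  have e : 2 * p / a = 2 * p * (1 / a) := by ring
  rw [e]
  generalize 1 / a = b at h1a ⊢
  have t1 : 0 ≤ p * b * y := by positivity
  have t2 : 0 ≤ (p - 1) * y ^ 2 := mul_nonneg (by linarith) (sq_nonneg y)
  have t3 : 0 ≤ p * b * (w * y) := by positivity
  have t4 : 0 ≤ (8 * p - 4) * (y ^ 2 * w) := by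
    apply mul_nonneg (by linarith) (mul_nonneg (sq_nonneg y) hw)
  have t5 : 0 ≤ (p - 1) * (y ^ 2 * w ^ 2) := by
    apply mul_nonneg (by linarith); positivity
  nlinarith [t1, t2, t3, t4, t5]

/-- For each `a > 0` and `y ∈ (0,1]`, `G_a(y) ≥ -4 log y`. -/
lemma G_lower (p : ℝ) (hp : 1 < p) (G : ℝ → ℝ → ℝ) (hG : IsGFamily p G)
    (a : ℝ) (ha : 0 < a) (y : ℝ) (hy : y ∈ Set.Ioc (0:ℝ) 1) :
    -4 * Real.log y ≤ G a y := by
  obtain ⟨hcont, hG1, hderiv, hpos, _⟩ := hG a ha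
  set H : ℝ → ℝ := fun t => G a t + 4 * Real.log t with hH
  have hderivH : ∀ x ∈ Set.Ioo (0:ℝ) 1,
      HasDerivAt H (-(Fa p a x (G a x)) + 4 * x⁻¹) x := by
    intro x hx
    exact (hderiv x hx).add (((Real.hasDerivAt_log (ne_of_gt hx.1)).const_mul 4))
  have hanti : AntitoneOn H (Set.Ioc 0 1) := by
    apply antitoneOn_of_deriv_nonpos (convex_Ioc 0 1)
    · refine hcont.add (continuousOn_const.mul (Real.continuousOn_log.mono ?_))
      intro t ht
      simpa using ne_of_gt ht.1
    · intro x hx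
      rw [interior_Ioc] at hx
      exact (hderivH x hx).differentiableAt.differentiableWithinAt
    · intro x hx
      rw [interior_Ioc] at hx
      rw [(hderivH x hx).deriv]
      have hF := Fa_lower p a x (G a x) hp ha hx.1 (hpos x hx).le
      have : 4 * x⁻¹ = 4 / x := by ring
      rw [this]; linarith
  have h1 : H 1 = 0 := by simp [hH, hG1]
  have := hanti hy (by norm_num : (1:ℝ) ∈ Set.Ioc (0:ℝ) 1) hy.2
  rw [h1] at this
  simp only [hH] at this
  linarith

theorem K_tendsto_atTop_at_zero (p : ℝ) (hp : 1 < p) (G : ℝ → ℝ → ℝ) (K : ℝ → ℝ)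
    (hG : IsGFamily p G)
    (hK : ∀ y ∈ Set.Ioc (0:ℝ) 1,
      Filter.Tendsto (fun a => G a y) Filter.atTop (nhds (K y))) :
    Filter.Tendsto K (nhdsWithin 0 (Set.Ioi 0)) Filter.atTop := by
  have hKlb : ∀ y ∈ Set.Ioc (0:ℝ) 1, -4 * Real.log y ≤ K y := by
    intro y hy
    refine ge_of_tendsto (hK y hy) ?_
    filter_upwards [eventually_ge_atTop (1:ℝ)] with a ha
    exact G_lower p hp G hG a (by linarith) y hy
  have hlog : Tendsto (fun y : ℝ => -4 * Real.log y) (nhdsWithin 0 (Set.Ioi 0)) atTop := by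
    have h1 : Tendsto (fun y : ℝ => -Real.log y) (nhdsWithin 0 (Set.Ioi 0)) atTop :=
      tendsto_neg_atBot_atTop.comp tendsto_log_nhdsGT_zero
    have h2 := h1.const_mul_atTop (by norm_num : (0:ℝ) < 4)
    convert h2 using 2 with y
    ring
  refine tendsto_atTop_mono' _ ?_ hlog
  filter_upwards [Ioc_mem_nhdsGT_of_mem (by norm_num : (0:ℝ) ∈ Set.Ico (0:ℝ) 1)] with y hy
  exact hKlb y hy
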